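/- Let k ≥ 1, let a : Fin (2k) → ℕ with a i > 0 for all i, and let m : ℕ satisfy ∏_i a i = m². In the field RatFunc ℚ of rational functions, let ι = Fin (2k) ⊕ Fin 2 and define v : ι → RatFunc ℚ by v (inl i) = (a i) · X, v (inr 0) = m · X^{4k}, and v (inr 1) = m · X^{2k}. Then the following are equivalent: (1) there exist a finite partition π of ι into nonempty blocks, a distinguished element d(B) ∈ B for each block B, and signs ε : blocks of π → ℤ, each ε B equal to 1 or −1 with ε B₀ = 1 for at least one block B₀, such that ∑_{B ∈ π} ε B · (v (d B) / ∏_{j ∈ B, j ≠ d B} v j) = X^{3k} − X^k; (2) there exists S : Finset (Fin (2k)) with S.card = k and ∏_{i ∈ S} a i = m. -/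

import Mathlib

open Finset

private lemma aux_single_prod {α : Type*} (s : Finset α) (e : α → ℤ) (c : α → ℚ) :
    ∏ j ∈ s, (HahnSeries.single (e j) (c j) : LaurentSeries ℚ) =
    HahnSeries.single (∑ j ∈ s, e j) (∏ j ∈ s, c j) := by
  induction s using Finset.cons_induction with
  | empty => simp
  | cons a s ha ih => simp [Finset.prod_cons, Finset.sum_cons, ih, HahnSeries.single_mul_single]

private lemma aux_single_div (p p' : ℤ) (q : ℚ) {q' : ℚ} (h : q' ≠ 0) :
    (HahnSeries.single p q : LaurentSeries ℚ) / HahnSeries.single p' q' =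
    HahnSeries.single (p - p') (q / q') := by
  rw [div_eq_iff (HahnSeries.single_ne_zero h), HahnSeries.single_mul_single,
    sub_add_cancel, div_mul_cancel₀ _ h]

private def coeffHom (n : ℤ) : LaurentSeries ℚ →+ ℚ where
  toFun x := x.coeff n
  map_zero' := rfl
  map_add' _ _ := rfl

private lemma aux_natcast_coe (c : ℕ) :
    ((c : RatFunc ℚ) : LaurentSeries ℚ) = HahnSeries.single (0:ℤ) (c:ℚ) := by
  rw [map_natCast, ← HahnSeries.C_apply, map_natCast]

private lemma aux_intcast_coe (c : ℤ) :
    ((c : RatFunc ℚ) : LaurentSeries ℚ) = HahnSeries.single (0:ℤ) (c:ℚ) := by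
  rw [map_intCast, ← HahnSeries.C_apply, map_intCast]

private lemma aux_coe_cx (c n : ℕ) :
    (((c : RatFunc ℚ) * RatFunc.X ^ n : RatFunc ℚ) : LaurentSeries ℚ) =
    HahnSeries.single (n:ℤ) (c : ℚ) := by
  rw [map_mul, map_pow, RatFunc.coe_X, ← RatFunc.single_one_eq_pow,
    aux_natcast_coe, HahnSeries.single_mul_single]
  simp

theorem stmt_8 (k : ℕ) (hk : 1 ≤ k) (a : Fin (2 * k) → ℕ) (ha : ∀ i, 0 < a i)
    (m : ℕ) (hm : ∏ i, a i = m ^ 2)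
    (v : Fin (2 * k) ⊕ Fin 2 → RatFunc ℚ)
    (hv1 : ∀ i, v (Sum.inl i) = (a i : RatFunc ℚ) * RatFunc.X)
    (hv2 : v (Sum.inr 0) = (m : RatFunc ℚ) * RatFunc.X ^ (4 * k))
    (hv3 : v (Sum.inr 1) = (m : RatFunc ℚ) * RatFunc.X ^ (2 * k)) :
    (∃ π : Finpartition (Finset.univ : Finset (Fin (2 * k) ⊕ Fin 2)),
      ∃ d : Finset (Fin (2 * k) ⊕ Fin 2) → Fin (2 * k) ⊕ Fin 2,
      ∃ ε : Finset (Fin (2 * k) ⊕ Fin 2) → ℤ,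
        (∀ B ∈ π.parts, d B ∈ B) ∧
        (∀ B ∈ π.parts, ε B = 1 ∨ ε B = -1) ∧ (∃ B₀ ∈ π.parts, ε B₀ = 1) ∧
        ∑ B ∈ π.parts, (ε B : RatFunc ℚ) * (v (d B) / ∏ j ∈ B.erase (d B), v j)
          = RatFunc.X ^ (3 * k) - RatFunc.X ^ k) ↔
    (∃ S : Finset (Fin (2 * k)), S.card = k ∧ ∏ i ∈ S, a i = m) := by
  constructor
  · rintro ⟨π, d, ε, hd, hε, -, hsum⟩
    classical
    have hm0 : 0 < m := by
      by_contra h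
      have : m = 0 := by omega
      subst this
      have := Finset.prod_pos (fun i _ => ha i) (s := Finset.univ)
      omega
    set E : Fin (2 * k) ⊕ Fin 2 → ℤ :=
      Sum.elim (fun _ => 1) (fun j => if j = 0 then (4*k : ℤ) else 2*k) with hE
    set C : Fin (2 * k) ⊕ Fin 2 → ℚ :=
      Sum.elim (fun i => (a i : ℚ)) (fun _ => (m : ℚ)) with hC
    have hC0 : ∀ j, 0 < C j := by
      rintro (i | j)
      · simpa [hC] using ha i
      · simpa [hC] using hm0
    have hE0 : ∀ j, (0:ℤ) ≤ E j := by
      rintro (i | j)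
      · simp [hE]
      · simp only [hE, Sum.elim_inr]; split <;> positivity
    have hEle : ∀ j, j ≠ Sum.inr 0 → E j ≤ 2*k := by
      rintro (i | j) hj
      · simp only [hE, Sum.elim_inl]; omega
      · fin_cases j
        · simp at hj
        · simp [hE]
    have hEr0 : E (Sum.inr 0) = 4*(k:ℤ) := by simp [hE]
    have hEr1 : E (Sum.inr 1) = 2*(k:ℤ) := by simp [hE]
    have hcoe : ∀ j, ((v j : RatFunc ℚ) : LaurentSeries ℚ) = HahnSeries.single (E j) (C j) := by
      rintro (i | j)
      · rw [hv1, show (RatFunc.X : RatFunc ℚ) = RatFunc.X ^ 1 by rw [pow_one]]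
        simpa [hE, hC] using aux_coe_cx (a i) 1
      · fin_cases j
        · rw [show Sum.inr ((fun i => i) (⟨0, by omega⟩ : Fin 2)) = (Sum.inr 0 : Fin (2*k) ⊕ Fin 2) from rfl,
            hv2]
          simpa [hE, hC] using aux_coe_cx m (4*k)
        · rw [show Sum.inr ((fun i => i) (⟨1, by omega⟩ : Fin 2)) = (Sum.inr 1 : Fin (2*k) ⊕ Fin 2) from rfl,
            hv3]
          simpa [hE, hC] using aux_coe_cx m (2*k)
    have hCprod : ∀ B : Finset (Fin (2*k) ⊕ Fin 2), (0:ℚ) < ∏ j ∈ B.erase (d B), C j :=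
      fun B => Finset.prod_pos (fun j _ => hC0 j)
    have hblock : ∀ B ∈ π.parts,
        ((((ε B : RatFunc ℚ)) * (v (d B) / ∏ j ∈ B.erase (d B), v j) : RatFunc ℚ) : LaurentSeries ℚ)
        = HahnSeries.single (E (d B) - ∑ j ∈ B.erase (d B), E j)
            ((ε B : ℚ) * (C (d B) / ∏ j ∈ B.erase (d B), C j)) := by
      intro B hB
      have hprod : ((∏ j ∈ B.erase (d B), v j : RatFunc ℚ) : LaurentSeries ℚ)
          = HahnSeries.single (∑ j ∈ B.erase (d B), E j) (∏ j ∈ B.erase (d B), C j) := by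
        rw [map_prod, ← aux_single_prod]
        exact Finset.prod_congr rfl fun j _ => by rw [hcoe]
      rw [map_mul, map_div₀, aux_intcast_coe, hprod, hcoe,
        aux_single_div _ _ _ (hCprod B).ne', HahnSeries.single_mul_single, zero_add]
    have hL : ∑ B ∈ π.parts, HahnSeries.single (E (d B) - ∑ j ∈ B.erase (d B), E j)
        ((ε B : ℚ) * (C (d B) / ∏ j ∈ B.erase (d B), C j))
        = HahnSeries.single ((3*k : ℕ) : ℤ) (1:ℚ) - HahnSeries.single ((k : ℕ) : ℤ) (1:ℚ) := by
      calc ∑ B ∈ π.parts, HahnSeries.single (E (d B) - ∑ j ∈ B.erase (d B), E j)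
            ((ε B : ℚ) * (C (d B) / ∏ j ∈ B.erase (d B), C j))
          = ((∑ B ∈ π.parts, (ε B : RatFunc ℚ) * (v (d B) / ∏ j ∈ B.erase (d B), v j)
              : RatFunc ℚ) : LaurentSeries ℚ) := by
            rw [map_sum]
            exact (Finset.sum_congr rfl fun B hB => by
              rw [hblock B hB]).symm
        _ = ((RatFunc.X ^ (3*k) - RatFunc.X ^ k : RatFunc ℚ) : LaurentSeries ℚ) := by rw [hsum]
        _ = _ := by
            rw [map_sub, map_pow, map_pow, RatFunc.coe_X,
              ← RatFunc.single_one_eq_pow, ← RatFunc.single_one_eq_pow]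
    have h3 := congrArg (coeffHom ((3*k : ℕ) : ℤ)) hL
    rw [map_sum, map_sub] at h3
    simp only [coeffHom, AddMonoidHom.coe_mk, ZeroHom.coe_mk, HahnSeries.coeff_single] at h3
    rw [if_pos trivial, if_neg (by exact_mod_cast (by omega : ¬ (3*k = k))), sub_zero] at h3
    obtain ⟨Bs, hBs, hmemBs⟩ := π.exists_mem (Finset.mem_univ (Sum.inr 0 : Fin (2*k) ⊕ Fin 2))
    rw [Finset.sum_eq_single_of_mem Bs hBs (fun B hB hne => ?_)] at h3
    swap
    · -- other blocks contribute 0 at exponent 3k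
      have hB0 : (Sum.inr 0 : Fin (2*k) ⊕ Fin 2) ∉ B := by
        intro hmem
        exact (Finset.disjoint_left.mp (π.disjoint hB hBs hne) hmem) hmemBs
      have hdB : E (d B) ≤ 2*k := hEle (d B) (fun h => hB0 (h ▸ hd B hB))
      have hsE : (0:ℤ) ≤ ∑ j ∈ B.erase (d B), E j := Finset.sum_nonneg fun j _ => hE0 j
      rw [if_neg]
      intro hc
      have hk' : (1:ℤ) ≤ (k:ℤ) := by exact_mod_cast hk
      push_cast at hc
      omega
    · -- now analyse the block Bs
      have hdBs : d Bs = Sum.inr 0 := by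
        by_contra hne
        have h1 : (Sum.inr 0 : Fin (2*k) ⊕ Fin 2) ∈ Bs.erase (d Bs) :=
          Finset.mem_erase.mpr ⟨fun h => hne h.symm, hmemBs⟩
        have hs : (4*(k:ℤ)) ≤ ∑ j ∈ Bs.erase (d Bs), E j := by
          have := Finset.single_le_sum (f := E) (fun j _ => hE0 j) h1
          rwa [hEr0] at this
        have hdB : E (d Bs) ≤ 2*k := hEle (d Bs) hne
        rw [if_neg] at h3
        · norm_num at h3
        intro hc
        have hk' : (1:ℤ) ≤ (k:ℤ) := by exact_mod_cast hk
        push_cast at hc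
        omega
      rw [hdBs] at h3
      have hr1 : (Sum.inr 1 : Fin (2*k) ⊕ Fin 2) ∉ Bs.erase (Sum.inr 0) := by
        intro hmem
        have hs : (2*(k:ℤ)) ≤ ∑ j ∈ Bs.erase (Sum.inr 0), E j := by
          have := Finset.single_le_sum (f := E) (fun j _ => hE0 j) hmem
          rwa [hEr1] at this
        rw [if_neg] at h3
        · norm_num at h3
        intro hc
        have hk' : (1:ℤ) ≤ (k:ℤ) := by exact_mod_cast hk
        rw [hEr0] at hc
        push_cast at hc
        omega
      set T : Finset (Fin (2*k)) := (Bs.erase (Sum.inr 0)).preimage Sum.inl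
        Sum.inl_injective.injOn with hT
      have himg : T.image Sum.inl = Bs.erase (Sum.inr 0) := by
        rw [hT, Finset.image_preimage, Finset.filter_true_of_mem]
        rintro (i | j) hx
        · simp
        · exfalso
          fin_cases j
          · exact (Finset.mem_erase.mp hx).1 rfl
          · exact hr1 hx
      have hsumE : ∑ j ∈ Bs.erase (Sum.inr 0), E j = (T.card : ℤ) := by
        rw [← himg, Finset.sum_image (fun x _ y _ h => Sum.inl.inj h)]
        simp [hE]
      have hprodC : ∏ j ∈ Bs.erase (Sum.inr 0), C j = ∏ i ∈ T, (a i : ℚ) := by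
        rw [← himg, Finset.prod_image (fun x _ y _ h => Sum.inl.inj h)]
        simp [hC]
      rw [hsumE, hEr0] at h3
      have hTcard : T.card = k := by
        by_contra hne
        rw [if_neg] at h3
        · norm_num at h3
        intro hc
        push_cast at hc
        omega
      rw [if_pos (by push_cast [hTcard]; ring), hprodC] at h3
      have hCr0 : C (Sum.inr 0) = (m:ℚ) := by simp [hC]
      rw [hCr0] at h3
      have hprodpos : (0:ℚ) < ∏ i ∈ T, (a i : ℚ) :=
        Finset.prod_pos fun i _ => by exact_mod_cast ha i
      have hmQ : (0:ℚ) < (m:ℚ) := by exact_mod_cast hm0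
      refine ⟨T, hTcard, ?_⟩
      rcases hε Bs hBs with h1 | h1
      · rw [h1] at h3
        push_cast at h3
        rw [one_mul, div_eq_one_iff_eq hprodpos.ne'] at h3
        exact_mod_cast h3.symm
      · exfalso
        rw [h1] at h3
        push_cast at h3
        have hdp : (0:ℚ) < (m:ℚ) / ∏ i ∈ T, (a i:ℚ) := div_pos hmQ hprodpos
        nlinarith
  · rintro ⟨S, hScard, hSprod⟩
    have hm0 : 0 < m := by
      by_contra h
      have : m = 0 := by omega
      subst this
      have := Finset.prod_pos (fun i _ => ha i) (s := Finset.univ)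
      omega
    have hScomp : ∏ i ∈ Sᶜ, a i = m := by
      have h1 : (∏ i ∈ S, a i) * ∏ i ∈ Sᶜ, a i = m ^ 2 := by
        rw [Finset.prod_mul_prod_compl]; exact hm
      rw [hSprod, pow_two] at h1
      exact Nat.eq_of_mul_eq_mul_left hm0 h1
    have hSccard : Sᶜ.card = k := by
      have := Finset.card_compl S
      simp [Fintype.card_fin, hScard] at this
      omega
    set P : Finset (Fin (2 * k) ⊕ Fin 2) := insert (Sum.inr 0) (Sᶜ.image Sum.inl) with hP
    set Q : Finset (Fin (2 * k) ⊕ Fin 2) := insert (Sum.inr 1) (S.image Sum.inl) with hQ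
    have hr0P : (Sum.inr 0 : Fin (2*k) ⊕ Fin 2) ∈ P := Finset.mem_insert_self _ _
    have hr0Q : (Sum.inr 0 : Fin (2*k) ⊕ Fin 2) ∉ Q := by
      simp [hQ]
    have hPQ : P ≠ Q := fun h => hr0Q (h ▸ hr0P)
    have hdisj : Disjoint P Q := by
      rw [Finset.disjoint_left]
      rintro (i | j) hx hy <;> simp [hP, hQ] at hx hy
      · exact absurd hy hx
      · rw [hx] at hy; exact absurd hy (by decide)
    have hX : (RatFunc.X : RatFunc ℚ) ≠ 0 := RatFunc.X_ne_zero
    have hmQ : (m : RatFunc ℚ) ≠ 0 := by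
      rw [← map_natCast (RatFunc.C : ℚ →+* RatFunc ℚ) m]
      simp only [ne_eq, map_eq_zero, Nat.cast_eq_zero]
      omega
    -- value of block P
    have hPval : v (Sum.inr 0) / ∏ j ∈ P.erase (Sum.inr 0), v j = RatFunc.X ^ (3 * k) := by
      have he : P.erase (Sum.inr 0) = Sᶜ.image Sum.inl := by
        rw [hP, Finset.erase_insert (by simp)]
      rw [he, Finset.prod_image (fun x _ y _ h => Sum.inl.inj h)]
      have : ∏ i ∈ Sᶜ, v (Sum.inl i) = (m : RatFunc ℚ) * RatFunc.X ^ k := by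
        simp only [hv1]
        rw [Finset.prod_mul_distrib, Finset.prod_const, hSccard, ← Nat.cast_prod, hScomp]
      rw [this, hv2, div_eq_iff (mul_ne_zero hmQ (pow_ne_zero _ hX)),
        show 4 * k = 3 * k + k by ring, pow_add]
      ring
    have hQval : v (Sum.inr 1) / ∏ j ∈ Q.erase (Sum.inr 1), v j = RatFunc.X ^ k := by
      have he : Q.erase (Sum.inr 1) = S.image Sum.inl := by
        rw [hQ, Finset.erase_insert (by simp)]
      rw [he, Finset.prod_image (fun x _ y _ h => Sum.inl.inj h)]
      have : ∏ i ∈ S, v (Sum.inl i) = (m : RatFunc ℚ) * RatFunc.X ^ k := by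
        simp only [hv1]
        rw [Finset.prod_mul_distrib, Finset.prod_const, hScard, ← Nat.cast_prod, hSprod]
      rw [this, hv3, div_eq_iff (mul_ne_zero hmQ (pow_ne_zero _ hX)),
        show 2 * k = k + k by ring, pow_add]
      ring
    -- the partition
    refine ⟨⟨{P, Q}, ?_, ?_, ?_⟩, fun B => if B = P then Sum.inr 0 else Sum.inr 1,
      fun B => if B = P then 1 else -1, ?_, ?_, ?_, ?_⟩
    · rw [Finset.supIndep_pair hPQ]; exact hdisj
    · rw [Finset.sup_insert, Finset.sup_singleton, id, id, Finset.sup_eq_union]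
      ext x
      simp only [Finset.mem_union, Finset.mem_univ, iff_true, hP, hQ]
      rcases x with i | j
      · by_cases h : i ∈ S
        · right; simp [h]
        · left; simp [h]
      · fin_cases j
        · left; exact Finset.mem_insert_self _ _
        · right; exact Finset.mem_insert_self _ _
    · simp only [Finset.mem_insert, Finset.mem_singleton, bot_eq_empty]
      push_neg
      constructor
      · intro h; exact absurd (h ▸ hr0P) (Finset.notMem_empty _)
      · intro h
        have : (Sum.inr 1 : Fin (2*k) ⊕ Fin 2) ∈ Q := Finset.mem_insert_self _ _
        exact absurd (h ▸ this) (Finset.notMem_empty _)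
    · intro B hB
      simp only [Finset.mem_insert, Finset.mem_singleton] at hB
      rcases hB with rfl | rfl
      · dsimp only; rw [if_pos rfl]; exact hr0P
      · dsimp only; rw [if_neg (Ne.symm hPQ)]; exact Finset.mem_insert_self _ _
    · intro B hB
      dsimp only
      split <;> simp
    · exact ⟨P, by simp, if_pos rfl⟩
    · rw [Finset.sum_pair hPQ]
      dsimp only
      rw [if_pos rfl, if_pos rfl, if_neg (Ne.symm hPQ), if_neg (Ne.symm hPQ), hPval, hQval]
      push_cast
      ring
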